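/- The class of {0,1}-lattices has the finite embeddability property: for every bounded lattice L and every finite subset S ⊆ L with ⊥ ∈ S and ⊤ ∈ S, there exist a finite bounded lattice K and an injective map f : S → K with f ⊥ = ⊥ and f ⊤ = ⊤ such that for all a, b, c ∈ S one has a ⊔ b = c if and only if f a ⊔ f b = f c, and a ⊓ b = c if and only if f a ⊓ f b = f c. -/

import Mathlib

section FEPaux

variable {L : Type} [Lattice L] [BoundedOrder L] (S : Set L)

/-- The closure of `S` under finite meets (including the empty meet `⊤`). -/
def fepT : Set L := {x | ∃ F : Finset L, ↑F ⊆ S ∧ F.inf id = x}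

lemma fep_subset_T : S ⊆ fepT S := fun a ha =>
  ⟨{a}, by simpa using ha, by simp⟩

lemma fepT_inf_mem {x y : L} (hx : x ∈ fepT S) (hy : y ∈ fepT S) :
    x ⊓ y ∈ fepT S := by
  classical
  obtain ⟨F, hF, rfl⟩ := hx
  obtain ⟨G, hG, rfl⟩ := hy
  refine ⟨F ∪ G, ?_, by simp [Finset.inf_union]⟩
  rw [Finset.coe_union]
  exact Set.union_subset hF hG

lemma fepT_finite (hS : S.Finite) : (fepT S).Finite := by
  have hfin : {F : Finset L | ↑F ⊆ S}.Finite := by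
    have : {F : Finset L | ↑F ⊆ S} = (fun F : Finset L => (↑F : Set L)) ⁻¹' {b | b ⊆ S} := rfl
    rw [this]
    exact Set.Finite.preimage (Set.injOn_of_injective Finset.coe_injective)
      hS.finite_subsets
  have : fepT S ⊆ (fun F : Finset L => F.inf id) '' {F : Finset L | ↑F ⊆ S} := by
    rintro x ⟨F, hF, rfl⟩
    exact ⟨F, hF, rfl⟩
  exact (Set.Finite.image _ hfin).subset this

/-- The closed sets of the closure system. -/
def fepClosed (X : Set L) : Prop :=
  X ⊆ fepT S ∧ (⊥ : L) ∈ X ∧ (∀ x ∈ X, ∀ y ∈ fepT S, y ≤ x → y ∈ X) ∧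
    (∀ x ∈ X, ∀ y ∈ X, x ⊔ y ∈ fepT S → x ⊔ y ∈ X)

lemma fepClosed_principal (hbot : (⊥ : L) ∈ S) (a : L) : fepClosed S (fepT S ∩ Set.Iic a) := by
  refine ⟨Set.inter_subset_left, ⟨fep_subset_T S hbot, bot_le⟩, ?_, ?_⟩
  · rintro x ⟨hxT, hxa⟩ y hyT hyx
    exact ⟨hyT, hyx.trans hxa⟩
  · rintro x ⟨hxT, hxa⟩ y ⟨hyT, hya⟩ hT
    exact ⟨hT, sup_le hxa hya⟩

def FepK : Type := {X : Set L // fepClosed S X}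

instance : PartialOrder (FepK S) := inferInstanceAs (PartialOrder {X : Set L // fepClosed S X})

lemma fepK_le_iff (X Y : FepK S) : X ≤ Y ↔ X.1 ⊆ Y.1 := Iff.rfl

@[reducible] def fepInfSet (hbot : (⊥ : L) ∈ S) : InfSet (FepK S) :=
  ⟨fun A => ⟨fepT S ∩ ⋂ X ∈ A, X.1, by
    refine ⟨Set.inter_subset_left, ⟨fep_subset_T S hbot, ?_⟩, ?_, ?_⟩
    · exact Set.mem_iInter₂.2 fun X _ => X.2.2.1
    · rintro x ⟨hxT, hx⟩ y hyT hyx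
      refine ⟨hyT, Set.mem_iInter₂.2 fun X hX => ?_⟩
      exact X.2.2.2.1 x (Set.mem_iInter₂.1 hx X hX) y hyT hyx
    · rintro x ⟨hxT, hx⟩ y ⟨hyT, hy⟩ hT
      refine ⟨hT, Set.mem_iInter₂.2 fun X hX => ?_⟩
      exact X.2.2.2.2 x (Set.mem_iInter₂.1 hx X hX) y (Set.mem_iInter₂.1 hy X hX) hT⟩⟩

lemma fep_isGLB (hbot : (⊥ : L) ∈ S) : ∀ A : Set (FepK S),
    @IsGLB (FepK S) _ A (@sInf _ (fepInfSet S hbot) A) := by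
  intro A
  constructor
  · intro X hX
    rw [fepK_le_iff]
    intro x hx
    exact Set.mem_iInter₂.1 hx.2 X hX
  · intro Y hY
    rw [fepK_le_iff]
    intro x hx
    exact ⟨Y.2.1 hx, Set.mem_iInter₂.2 fun X hX => hY hX hx⟩

@[reducible] noncomputable def fepCL (hbot : (⊥ : L) ∈ S) : CompleteLattice (FepK S) :=
  @completeLatticeOfInf _ _ (fepInfSet S hbot) (fep_isGLB S hbot)

end FEPaux

/-- The class of `{0,1}`-lattices has the finite embeddability property. -/
theorem bounded_lattice_fep (L : Type) [Lattice L] [BoundedOrder L]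
    (S : Set L) (hS : S.Finite) (hbot : (⊥ : L) ∈ S) (htop : (⊤ : L) ∈ S) :
    ∃ (K : Type) (_ : Lattice K) (_ : BoundedOrder K) (_ : Fintype K) (f : S → K),
      Function.Injective f ∧
      f ⟨⊥, hbot⟩ = ⊥ ∧ f ⟨⊤, htop⟩ = ⊤ ∧
      ∀ a b c : S,
        (((a : L) ⊔ (b : L) = (c : L)) ↔ f a ⊔ f b = f c) ∧
        (((a : L) ⊓ (b : L) = (c : L)) ↔ f a ⊓ f b = f c) := by
  letI CL : CompleteLattice (FepK S) := fepCL S hbot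
  -- the embedding
  set T := fepT S with hT
  have hST : S ⊆ T := fep_subset_T S
  let f : S → FepK S := fun a => ⟨T ∩ Set.Iic (a : L), fepClosed_principal S hbot _⟩
  -- helper: principal sets determine elements of T
  have hdet : ∀ u ∈ T, ∀ v ∈ T, T ∩ Set.Iic u = T ∩ Set.Iic v → u = v := by
    intro u hu v hv h
    have h1 : u ∈ T ∩ Set.Iic v := h ▸ ⟨hu, le_rfl⟩
    have h2 : v ∈ T ∩ Set.Iic u := h.symm ▸ ⟨hv, le_rfl⟩
    exact le_antisymm h1.2 h2.2
  -- finiteness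
  have hKfin : {X : Set L | fepClosed S X}.Finite := by
    refine ((fepT_finite S hS).finite_subsets).subset ?_
    intro X hX
    exact hX.1
  refine ⟨FepK S, inferInstance, inferInstance, hKfin.fintype, f, ?_, ?_, ?_, ?_⟩
  · -- injectivity
    intro a b h
    have := congrArg Subtype.val h
    exact Subtype.ext (hdet _ (hST a.2) _ (hST b.2) this)
  · -- bottom
    refine le_antisymm ?_ bot_le
    rw [fepK_le_iff]
    rintro x ⟨hxT, hx⟩
    have : x = (⊥ : L) := le_antisymm hx bot_le
    rw [this]
    exact (⊥ : FepK S).2.2.1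
  · -- top
    refine le_antisymm le_top ?_
    rw [fepK_le_iff]
    intro x hx
    exact ⟨(⊤ : FepK S).2.1 hx, le_top⟩
  · intro a b c
    constructor
    · -- join
      have hlub : IsLUB {f a, f b} (f a ⊔ f b) := isLUB_pair
      constructor
      · intro hc
        have hlub' : IsLUB {f a, f b} (f c) := by
          constructor
          · rintro X (rfl | rfl) <;> rw [fepK_le_iff]
            · rintro x ⟨hxT, hxle⟩
              exact ⟨hxT, hxle.trans (le_sup_left.trans_eq hc)⟩
            · rintro x ⟨hxT, hxle⟩
              exact ⟨hxT, hxle.trans (le_sup_right.trans_eq hc)⟩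
          · intro Y hY
            have ha : (a : L) ∈ Y.1 :=
              (fepK_le_iff S _ _).1 (hY (Set.mem_insert _ _)) ⟨hST a.2, le_rfl⟩
            have hb : (b : L) ∈ Y.1 :=
              (fepK_le_iff S _ _).1 (hY (Set.mem_insert_of_mem _ rfl)) ⟨hST b.2, le_rfl⟩
            have hcY : (c : L) ∈ Y.1 := by
              have := Y.2.2.2.2 _ ha _ hb (hc ▸ hST c.2)
              rwa [hc] at this
            rw [fepK_le_iff]
            rintro x ⟨hxT, hxle⟩
            exact Y.2.2.2.1 _ hcY _ hxT hxle
        exact hlub.unique hlub'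
      · intro h
        have hlubc : IsLUB {f a, f b} (f c) := h ▸ hlub
        have ha : (a : L) ≤ c :=
          ((fepK_le_iff S _ _).1 (hlubc.1 (Set.mem_insert _ _)) ⟨hST a.2, le_rfl⟩).2
        have hb : (b : L) ≤ c :=
          ((fepK_le_iff S _ _).1 (hlubc.1 (Set.mem_insert_of_mem _ rfl))
            ⟨hST b.2, le_rfl⟩).2
        have hY0 : fepClosed S (T ∩ Set.Iic ((a : L) ⊔ (b : L))) :=
          fepClosed_principal S hbot _
        have hub : (⟨_, hY0⟩ : FepK S) ∈ upperBounds {f a, f b} := by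
          rintro X (rfl | rfl) <;> refine (fepK_le_iff _ _ _).2 ?_
          · rintro x ⟨hxT, hxle⟩; exact ⟨hxT, hxle.trans le_sup_left⟩
          · rintro x ⟨hxT, hxle⟩; exact ⟨hxT, hxle.trans le_sup_right⟩
        have hc2 := (fepK_le_iff S _ _).1 (hlubc.2 hub) ⟨hST c.2, le_rfl⟩
        exact le_antisymm (sup_le ha hb) hc2.2
    · -- meet
      have hW : fepClosed S (T ∩ Set.Iic ((a : L) ⊓ (b : L))) :=
        fepClosed_principal S hbot _
      have hglb : IsGLB {f a, f b} (⟨T ∩ Set.Iic ((a:L) ⊓ (b:L)), hW⟩ : FepK S) := by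
        constructor
        · rintro X (rfl | rfl) <;> refine (fepK_le_iff _ _ _).2 ?_ <;> rintro x ⟨hxT, hxle⟩
          · exact ⟨hxT, hxle.trans inf_le_left⟩
          · exact ⟨hxT, hxle.trans inf_le_right⟩
        · intro Y hY
          refine (fepK_le_iff _ _ _).2 ?_
          intro x hx
          have h1 := (fepK_le_iff S _ _).1 (hY (Set.mem_insert _ _)) hx
          have h2 := (fepK_le_iff S _ _).1 (hY (Set.mem_insert_of_mem _ rfl)) hx
          exact ⟨h1.1, le_inf h1.2 h2.2⟩
      have heq : f a ⊓ f b = ⟨T ∩ Set.Iic ((a:L) ⊓ (b:L)), hW⟩ :=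
        isGLB_pair.unique hglb
      rw [heq]
      constructor
      · intro hc
        exact Subtype.ext
          (show T ∩ Set.Iic ((a : L) ⊓ (b : L)) = T ∩ Set.Iic (c : L) by rw [hc])
      · intro hc
        have := congrArg Subtype.val hc
        exact hdet _ (fepT_inf_mem S (hST a.2) (hST b.2)) _ (hST c.2) this
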